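/- The infinite Fibonacci word f is not ultimately periodic; that is, there do not exist an integer p ≥ 1 and an index n ≥ 0 such that f[i] = f[i+p] for all i ≥ n. -/

import Mathlib

/-- The Fibonacci morphism φ: 0 ↦ 01, 1 ↦ 0. -/
def fibPhi (w : List ℕ) : List ℕ := (w.map (fun c => if c = 0 then [0, 1] else [0])).flatten

/-- The infinite Fibonacci word f = 0100101001001⋯, the fixed point of φ starting with 0. -/
def fibWord (i : ℕ) : ℕ := ((fibPhi^[i + 2]) [0]).getD i 0

namespace FibAux

def W (m : ℕ) : List ℕ := (fibPhi^[m]) [0]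

lemma fibPhi_cons (a : ℕ) (w : List ℕ) :
    fibPhi (a :: w) = (if a = 0 then [0,1] else [0]) ++ fibPhi w := by
  simp [fibPhi]

lemma fibPhi_append (u v : List ℕ) : fibPhi (u ++ v) = fibPhi u ++ fibPhi v := by
  simp [fibPhi]

lemma count0_fibPhi (w : List ℕ) : (fibPhi w).count 0 = w.length := by
  induction w with
  | nil => simp [fibPhi]
  | cons a w ih =>
    rw [fibPhi_cons, List.count_append, ih]
    by_cases h : a = 0 <;> simp [h] <;> omega

lemma length_fibPhi (w : List ℕ) : (fibPhi w).length = w.length + w.count 0 := by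
  induction w with
  | nil => simp [fibPhi]
  | cons a w ih =>
    rw [fibPhi_cons, List.length_append, ih, List.count_cons]
    by_cases h : a = 0 <;> simp [h] <;> omega

lemma W_succ (m : ℕ) : W (m+1) = fibPhi (W m) := Function.iterate_succ_apply' _ _ _

lemma W_stats (m : ℕ) : (W m).length = Nat.fib (m+2) ∧ (W m).count 0 = Nat.fib (m+1) := by
  induction m with
  | zero => simp [W, fibPhi]
  | succ m ih =>
    rw [W_succ, length_fibPhi, count0_fibPhi, ih.1, ih.2]
    refine ⟨?_, rfl⟩
    rw [show m+1+2 = m+3 by omega]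
    have : Nat.fib (m+3) = Nat.fib (m+1) + Nat.fib (m+2) := Nat.fib_add_two
    omega

lemma fibPhi_prefix {u v : List ℕ} (h : u <+: v) : fibPhi u <+: fibPhi v := by
  obtain ⟨t, rfl⟩ := h
  rw [fibPhi_append]
  exact List.prefix_append _ _

lemma W_prefix (m : ℕ) : W m <+: W (m+1) := by
  induction m with
  | zero => exact ⟨[1], rfl⟩
  | succ m ih => rw [W_succ m, W_succ (m+1)]; exact fibPhi_prefix ih

lemma W_prefix_of_le {m m' : ℕ} (h : m ≤ m') : W m <+: W m' := by
  induction m', h using Nat.le_induction with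
  | base => exact List.prefix_refl _
  | succ k hk ih => exact ih.trans (W_prefix k)

lemma getD_prefix {u v : List ℕ} (h : u <+: v) {i : ℕ} (hi : i < u.length) :
    v.getD i 0 = u.getD i 0 := by
  obtain ⟨t, rfl⟩ := h
  rw [List.getD_eq_getElem _ _ hi, List.getD_eq_getElem _ _ (by simp; omega)]
  exact List.getElem_append_left hi

lemma lt_fib (i : ℕ) : i < Nat.fib (i+4) := by
  induction i with
  | zero => decide
  | succ i ih =>
    have h0 : Nat.fib (i+1+4) = Nat.fib (i+5) := by rw [show i+1+4 = i+5 by omega]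
    have h1 : Nat.fib (i+5) = Nat.fib (i+3) + Nat.fib (i+4) := Nat.fib_add_two
    have h2 : 0 < Nat.fib (i+3) := Nat.fib_pos.mpr (by omega)
    omega

lemma fibWord_eq_W {m i : ℕ} (h : i < (W m).length) : fibWord i = (W m).getD i 0 := by
  have h1 : W m <+: W (max m (i+2)) := W_prefix_of_le (le_max_left _ _)
  have h2 : W (i+2) <+: W (max m (i+2)) := W_prefix_of_le (le_max_right _ _)
  have hi : i < (W (i+2)).length := by
    rw [(W_stats (i+2)).1]; exact lt_fib i
  have e : fibWord i = (W (i+2)).getD i 0 := rfl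
  rw [e, ← getD_prefix h2 hi, getD_prefix h1 h]

lemma range_map_fibWord (m : ℕ) : (List.range (Nat.fib (m+2))).map fibWord = W m := by
  apply List.ext_getElem
  · simp [(W_stats m).1]
  · intro i h1 h2
    simp only [List.getElem_map, List.getElem_range]
    rw [fibWord_eq_W h2, List.getD_eq_getElem]

end FibAux

namespace FibAux

def Z (N : ℕ) : ℕ := ((List.range N).map fibWord).count 0

def wcnt (p j : ℕ) : ℕ := ((List.range p).map (fun s => fibWord (j+s))).count 0

lemma Z_fib (m : ℕ) : Z (Nat.fib (m+2)) = Nat.fib (m+1) := by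
  rw [Z, range_map_fibWord]; exact (W_stats m).2

lemma Z_le (N : ℕ) : Z N ≤ N := by
  calc Z N ≤ ((List.range N).map fibWord).length := List.count_le_length
  _ = N := by simp

lemma wcnt_le (p j : ℕ) : wcnt p j ≤ p := by
  calc wcnt p j ≤ ((List.range p).map (fun s => fibWord (j+s))).length := List.count_le_length
  _ = p := by simp

lemma Z_add (N p : ℕ) : Z (N + p) = Z N + wcnt p N := by
  rw [Z, List.range_add, List.map_append, List.count_append, List.map_map]
  rfl

lemma wcnt_step {p n : ℕ} (hp : 1 ≤ p) (hper : ∀ i ≥ n, fibWord i = fibWord (i + p))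
    {j : ℕ} (hj : n ≤ j) : wcnt p (j+1) = wcnt p j := by
  obtain ⟨q, rfl⟩ : ∃ q, p = q + 1 := ⟨p-1, by omega⟩
  have e1 : (List.range (q+1)).map (fun s => fibWord (j+s))
      = fibWord j :: (List.range q).map (fun s => fibWord (j+1+s)) := by
    rw [List.range_succ_eq_map, List.map_cons, List.map_map]
    congr 1
    simp only [List.map_inj_left, Function.comp_apply, List.mem_range]
    intro s _
    congr 1
    omega
  have e2 : (List.range (q+1)).map (fun s => fibWord (j+1+s))
      = ((List.range q).map (fun s => fibWord (j+1+s))) ++ [fibWord (j+1+q)] := by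
    rw [@List.range_succ q, List.map_append]
    rfl
  have e3 : fibWord (j+1+q) = fibWord j := by
    rw [show j+1+q = j+(q+1) by omega]
    exact (hper j hj).symm
  rw [wcnt, wcnt, e1, e2, e3]
  simp [List.count_append, List.count_cons]

lemma wcnt_const {p n : ℕ} (hp : 1 ≤ p) (hper : ∀ i ≥ n, fibWord i = fibWord (i + p))
    {j : ℕ} (hj : n ≤ j) : wcnt p j = wcnt p n := by
  induction j, hj using Nat.le_induction with
  | base => rfl
  | succ k hk ih => rw [wcnt_step hp hper hk, ih]

lemma Z_per {p n : ℕ} (hp : 1 ≤ p) (hper : ∀ i ≥ n, fibWord i = fibWord (i + p))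
    {N : ℕ} (hN : n ≤ N) : Z (N + p) = Z N + wcnt p n := by
  rw [Z_add, wcnt_const hp hper hN]

end FibAux

namespace FibAux

lemma growth (t : ℕ → ℤ) (ht : ∀ m, t (m+2) = t m + t (m+1)) (M : ℕ)
    (h0 : 0 ≤ t M) (h1 : 0 ≤ t (M+1)) (h2 : 1 ≤ t M + t (M+1)) :
    ∀ k : ℕ, (1 + k : ℤ) ≤ t (M+2+2*k) ∧ (1:ℤ) ≤ t (M+2+2*k+1) := by
  intro k
  induction k with
  | zero =>
    have e2 := ht M
    have e3 := ht (M+1)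
    rw [show M+2+2*0 = M+2 by omega, show M+2+2*0+1 = M+1+2 by omega]
    constructor <;> push_cast <;> linarith
  | succ k ih =>
    have e1 := ht (M+2+2*k)
    have e2 := ht (M+2+2*k+1)
    rw [show M+2+2*(k+1) = M+2+2*k+2 by omega]
    rw [show M+2+2*k+1+1 = M+2+2*k+2 by omega, show M+2+2*k+1+2 = M+2+2*k+2+1 by omega] at e2
    constructor <;> push_cast <;> linarith [ih.1, ih.2]

lemma no_pos_pair (t : ℕ → ℤ) (ht : ∀ m, t (m+2) = t m + t (m+1)) (B m₀ : ℕ)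
    (hb : ∀ m, m ≥ m₀ → (t m).natAbs ≤ B) (M : ℕ) (hM : m₀ ≤ M)
    (h0 : 0 ≤ t M) (h1 : 0 ≤ t (M+1)) (h2 : 1 ≤ t M + t (M+1)) : False := by
  have hg := (growth t ht M h0 h1 h2 B).1
  have hB := hb (M+2+2*B) (by omega)
  omega

lemma no_neg_pair (t : ℕ → ℤ) (ht : ∀ m, t (m+2) = t m + t (m+1)) (B m₀ : ℕ)
    (hb : ∀ m, m ≥ m₀ → (t m).natAbs ≤ B) (M : ℕ) (hM : m₀ ≤ M)
    (h0 : t M ≤ 0) (h1 : t (M+1) ≤ 0) (h2 : t M + t (M+1) ≤ -1) : False := by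
  refine no_pos_pair (fun m => -t m)
    (fun m => by show -t (m+2) = -t m + -t (m+1); rw [ht m]; ring) B m₀
    (fun m hm => by show (-t m).natAbs ≤ B; rw [Int.natAbs_neg]; exact hb m hm) M hM
    (by show 0 ≤ -t M; omega) (by show 0 ≤ -t (M+1); omega)
    (by show 1 ≤ -t M + -t (M+1); omega)

lemma exists_zero_pair (t : ℕ → ℤ) (ht : ∀ m, t (m+2) = t m + t (m+1)) (B m₀ : ℕ)
    (hb : ∀ m, m ≥ m₀ → (t m).natAbs ≤ B) :
    ∃ m, m₀ ≤ m ∧ t m = 0 ∧ t (m+1) = 0 := by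
  have key : ∀ μ : ℕ, ∀ M, m₀ ≤ M → (t M).natAbs + (t (M+1)).natAbs ≤ μ →
      ∃ m, m₀ ≤ m ∧ t m = 0 ∧ t (m+1) = 0 := by
    intro μ
    induction μ with
    | zero => intro M hM h; exact ⟨M, hM, by omega, by omega⟩
    | succ μ ih =>
      intro M hM h
      have e2 := ht M
      have e3 := ht (M+1)
      have e4 := ht (M+2)
      have n1 : t (M+1+1) = t (M+2) := by norm_num
      have n2 : t (M+1+2) = t (M+3) := by norm_num
      have n3 : t (M+2+1) = t (M+3) := by norm_num
      have n4 : t (M+2+2) = t (M+4) := by norm_num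
      by_cases hz : t M = 0 ∧ t (M+1) = 0
      · exact ⟨M, hM, hz.1, hz.2⟩
      by_cases hpos : 0 ≤ t M ∧ 0 ≤ t (M+1)
      · exact (no_pos_pair t ht B m₀ hb M hM hpos.1 hpos.2 (by omega)).elim
      by_cases hneg : t M ≤ 0 ∧ t (M+1) ≤ 0
      · exact (no_neg_pair t ht B m₀ hb M hM hneg.1 hneg.2 (by omega)).elim
      -- strict opposite signs
      have hop : (0 < t M ∧ t (M+1) < 0) ∨ (t M < 0 ∧ 0 < t (M+1)) := by omega
      by_cases hcmp : (t M).natAbs < (t (M+1)).natAbs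
      · -- pair at M+1 has same strict sign as t (M+1)
        rcases hop with ⟨ha, hb'⟩ | ⟨ha, hb'⟩
        · exact (no_neg_pair t ht B m₀ hb (M+1) (by omega) (by omega) (by omega) (by omega)).elim
        · exact (no_pos_pair t ht B m₀ hb (M+1) (by omega) (by omega) (by omega) (by omega)).elim
      by_cases heq : (t M).natAbs = (t (M+1)).natAbs
      · -- t (M+2) = 0, t (M+3) = t (M+1)
        rcases hop with ⟨ha, hb'⟩ | ⟨ha, hb'⟩
        · exact (no_neg_pair t ht B m₀ hb (M+2) (by omega) (by omega) (by omega) (by omega)).elim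
        · exact (no_pos_pair t ht B m₀ hb (M+2) (by omega) (by omega) (by omega) (by omega)).elim
      · -- natAbs (t (M+1)) < natAbs (t M): measure decreases at M+1
        exact ih (M+1) (by omega) (by omega)
  exact key ((t m₀).natAbs + (t (m₀+1)).natAbs) m₀ le_rfl le_rfl

lemma cassini (m : ℕ) :
    ((Nat.fib (m+1) : ℤ) * Nat.fib (m+3) - (Nat.fib (m+2):ℤ)^2 = 1) ∨
    ((Nat.fib (m+1) : ℤ) * Nat.fib (m+3) - (Nat.fib (m+2):ℤ)^2 = -1) := by
  induction m with
  | zero => left; norm_num [show Nat.fib 1 = 1 from rfl, show Nat.fib 2 = 1 from rfl,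
      show Nat.fib 3 = 2 from rfl]
  | succ m ih =>
    rw [show m+1+1 = m+2 by omega, show m+1+3 = m+4 by omega, show m+1+2 = m+3 by omega]
    have e4 : Nat.fib (m+4) = Nat.fib (m+2) + Nat.fib (m+3) := Nat.fib_add_two
    have e3 : Nat.fib (m+3) = Nat.fib (m+1) + Nat.fib (m+2) := Nat.fib_add_two
    rw [e4, e3]
    rcases ih with h | h
    · right; push_cast; rw [e3] at h; push_cast at h; linear_combination -h
    · left; push_cast; rw [e3] at h; push_cast at h; linear_combination -h

end FibAux

/-- A finite word is a factor of the infinite Fibonacci word. -/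
def IsFibFactor (x : List ℕ) : Prop :=
  ∃ i : ℕ, x = (List.range x.length).map (fun t => fibWord (i + t))

/-- The infinite Fibonacci word is not ultimately periodic. -/
theorem fibWord_not_ultimately_periodic :
    ¬ ∃ p : ℕ, 1 ≤ p ∧ ∃ n : ℕ, ∀ i ≥ n, fibWord i = fibWord (i + p) := by
  rintro ⟨p, hp, n, hper⟩
  set c := FibAux.wcnt p n with hc
  set g : ℕ → ℤ := fun N => (p : ℤ) * FibAux.Z N - (c : ℤ) * N with hg
  have hgper : ∀ N, n ≤ N → g (N + p) = g N := by
    intro N hN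
    simp only [hg]
    rw [FibAux.Z_per hp hper hN]
    push_cast
    ring
  set B : ℕ := p * (n + p) with hB
  have hgbound : ∀ N, n ≤ N → (g N).natAbs ≤ B := by
    intro N
    induction N using Nat.strong_induction_on with
    | _ N ih =>
      intro hN
      by_cases h : N < n + p
      · have h1 : FibAux.Z N ≤ N := FibAux.Z_le N
        have h2 : c ≤ p := FibAux.wcnt_le p n
        have h3 : p * FibAux.Z N ≤ p * (n + p) := Nat.mul_le_mul_left _ (by omega)
        have h4 : c * N ≤ p * (n + p) := Nat.mul_le_mul (by omega) (by omega)
        simp only [hg]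
        rw [show (p:ℤ) * (FibAux.Z N : ℤ) = ((p * FibAux.Z N : ℕ) : ℤ) by push_cast; ring,
          show (c:ℤ) * (N : ℤ) = ((c * N : ℕ) : ℤ) by push_cast; ring]
        omega
      · have hh : n ≤ N - p := by omega
        have hpe := hgper (N - p) hh
        rw [show N - p + p = N by omega] at hpe
        rw [hpe]
        exact ih (N - p) (by omega) hh
  set t : ℕ → ℤ := fun m => (p:ℤ) * Nat.fib (m+1) - (c:ℤ) * Nat.fib (m+2) with htdef
  have htg : ∀ m, t m = g (Nat.fib (m+2)) := by
    intro m
    simp only [htdef, hg, FibAux.Z_fib]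
  have ht : ∀ m, t (m+2) = t m + t (m+1) := by
    intro m
    simp only [htdef]
    have e1 : Nat.fib (m+2+1) = Nat.fib (m+1) + Nat.fib (m+2) := by
      rw [show m+2+1 = m+1+2 by omega]; exact Nat.fib_add_two
    have e2 : Nat.fib (m+2+2) = Nat.fib (m+2) + Nat.fib (m+2+1) := Nat.fib_add_two
    rw [show m+1+1 = m+2 by omega, show m+1+2 = m+2+1 by omega, e2, e1]
    push_cast
    ring
  have htb : ∀ m, m ≥ n + 5 → (t m).natAbs ≤ B := by
    intro m hm
    rw [htg m]
    apply hgbound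
    have h5 : m + 2 ≤ Nat.fib (m + 2) := Nat.le_fib_self (by omega)
    omega
  obtain ⟨m, hm, hz1, hz2⟩ := FibAux.exists_zero_pair t ht B (n + 5) htb
  have c1 : (p:ℤ) * Nat.fib (m+1) = (c:ℤ) * Nat.fib (m+2) := by
    simp only [htdef] at hz1; linarith
  have c2 : (p:ℤ) * Nat.fib (m+2) = (c:ℤ) * Nat.fib (m+3) := by
    simp only [htdef] at hz2
    rw [show m+1+1 = m+2 by omega, show m+1+2 = m+3 by omega] at hz2
    linarith
  have key : (p:ℤ) * ((Nat.fib (m+1) : ℤ) * Nat.fib (m+3) - (Nat.fib (m+2):ℤ)^2) = 0 := by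
    linear_combination (Nat.fib (m+3):ℤ) * c1 - (Nat.fib (m+2):ℤ) * c2
  rcases FibAux.cassini m with h | h <;> rw [h] at key <;> simp at key <;> omega
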